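/- arXiv:1502.04735 — 2 statements merged into one kernel-verified Lean document; each statement's English description precedes it below -/
import Mathlib

section
/- (No restriction of information, weak self-reinforcement.) Let α = 0 and suppose ρ ≤ 1. Then H_0(u) = r(v*(u)) G_0(u) − u < 0 for every u ∈ (0, ū). Consequently u = 0 is the only zero of H_0 on [0, ū), i.e. the non-excited state (0, v*(0)) is the unique constant steady state. -/
/-- no restriction of information, weak self-reinforcement:
if `ρ ≤ 1` then `H_0(u) < 0` on `(0, ū)`, hence `u = 0` is the only zero of
`H_0` on `[0, ū)`. -/
theorem stmt4 (ρ β abar mbar p k₂ : ℝ)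
    (hρ : 0 < ρ) (hβ : 0 < β) (hm : 0 < mbar) (hp : 0 < p)
    (hk₂ : k₂ ∈ Set.Ioo (0 : ℝ) 1) (hρ1 : ρ ≤ 1)
    (r h : ℝ → ℝ) (G : ℝ → ℝ → ℝ)
    (hr : ∀ z, r z = ρ / (1 + Real.exp (-β * (z - abar))))
    (hh : ∀ u, h u = (1 + mbar * u) ^ (-p))
    (hG : ∀ a u, G a u = if u ≤ a then 0 else (u - a) * (1 - u))
    (ubar : ℝ) (hubar : ubar = (1 / mbar) * ((1 / k₂) ^ (1 / p) - 1))
    (vstar : ℝ → ℝ) (hv : ∀ u, vstar u = 1 / (h u - k₂))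
    (H : ℝ → ℝ) (hH : ∀ u, H u = r (vstar u) * G 0 u - u) :
    (∀ u ∈ Set.Ioo (0 : ℝ) ubar, H u < 0) ∧
      (∀ u ∈ Set.Ico (0 : ℝ) ubar, H u = 0 → u = 0) := by
  have hneg : ∀ u ∈ Set.Ioo (0 : ℝ) ubar, H u < 0 := by
    intro u hu
    obtain ⟨hu0, _⟩ := hu
    have hrpos : 0 < r (vstar u) := by
      rw [hr]
      positivity
    have hrlt : r (vstar u) < 1 := by
      rw [hr]
      have he : 0 < Real.exp (-β * (vstar u - abar)) := Real.exp_pos _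
      rw [div_lt_one (by linarith)]
      linarith
    have hGu : G 0 u = (u - 0) * (1 - u) := by
      rw [hG]; simp [not_le.mpr hu0, hu0.le, hu0.not_ge]
    rw [hH, hGu]
    rcases le_or_gt 1 u with h1 | h1
    · have : r (vstar u) * ((u - 0) * (1 - u)) ≤ 0 := by
        apply mul_nonpos_of_nonneg_of_nonpos hrpos.le
        nlinarith
      linarith
    · have h2 : 0 ≤ (u - 0) * (1 - u) := by nlinarith
      nlinarith [mul_le_mul_of_nonneg_right hrlt.le h2, mul_pos hu0 hu0]
  refine ⟨hneg, ?_⟩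
  intro u hu hHu
  by_contra h0
  have hu0 : 0 < u := lt_of_le_of_ne hu.1 (Ne.symm h0)
  exact absurd hHu (hneg u ⟨hu0, hu.2⟩).ne
end

section
/- (Strong self-reinforcement creates an excited equilibrium for every transition rate, α = 0.) Let α = 0 and fix u₀ ∈ (0, min{1, ū}) such that v*(u₀) ≥ ā. Then for every ρ > 2/(1 − u₀) and every β > 0 one has r(v*(u₀)) ≥ ρ/2 and hence H_0(u₀) = r(v*(u₀)) u₀ (1 − u₀) − u₀ > 0. -/
/-- strong self-reinforcement creates an excited equilibrium for
every transition rate, α = 0: fix `u₀ ∈ (0, min{1, ū})` with `v*(u₀) ≥ ā`.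
Then for `ρ > 2/(1 − u₀)` and every `β > 0`, `r(v*(u₀)) ≥ ρ/2`, and hence
`H_0(u₀) = r(v*(u₀)) u₀ (1 − u₀) − u₀ > 0`. -/
theorem stmt18 (ρ β abar mbar p k₂ : ℝ)
    (hm : 0 < mbar) (hp : 0 < p) (hk₂ : k₂ ∈ Set.Ioo (0 : ℝ) 1)
    (r h : ℝ → ℝ)
    (hr : ∀ z, r z = ρ / (1 + Real.exp (-β * (z - abar))))
    (hh : ∀ u, h u = (1 + mbar * u) ^ (-p))
    (ubar : ℝ) (hubar : ubar = (1 / mbar) * ((1 / k₂) ^ (1 / p) - 1))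
    (vstar : ℝ → ℝ) (hv : ∀ u, vstar u = 1 / (h u - k₂))
    (u₀ : ℝ) (hu₀ : u₀ ∈ Set.Ioo 0 (min 1 ubar))
    (hva : abar ≤ vstar u₀)
    (hρ : 2 / (1 - u₀) < ρ) (hβ : 0 < β) :
    ρ / 2 ≤ r (vstar u₀) ∧
      0 < r (vstar u₀) * (u₀ * (1 - u₀)) - u₀ := by
  obtain ⟨hu0, hu1⟩ := hu₀
  have hu1' : u₀ < 1 := lt_of_lt_of_le hu1 (min_le_left _ _)
  have h1u : 0 < 1 - u₀ := by linarith
  have hρpos : 0 < ρ := lt_trans (div_pos two_pos h1u) hρ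
  have hexp : Real.exp (-β * (vstar u₀ - abar)) ≤ 1 := by
    rw [Real.exp_le_one_iff]
    have : 0 ≤ vstar u₀ - abar := by linarith
    nlinarith
  have hden : 0 < 1 + Real.exp (-β * (vstar u₀ - abar)) :=
    by positivity
  have hmain : ρ / 2 ≤ r (vstar u₀) := by
    rw [hr]
    rw [div_le_div_iff₀ two_pos hden]
    nlinarith
  refine ⟨hmain, ?_⟩
  have hρ2 : 2 < ρ * (1 - u₀) := by
    rw [div_lt_iff₀ h1u] at hρ; linarith
  have : u₀ < ρ / 2 * (u₀ * (1 - u₀)) := by nlinarith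
  nlinarith [mul_le_mul_of_nonneg_right hmain (by positivity : (0:ℝ) ≤ u₀ * (1 - u₀))]
end
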